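/- Let (G, μ) be an ε-coherent massed graph and let Y ⊆ V(G) with μ(Y) ≥ 3ε. Then there is a connected subset X ⊆ Y with μ(X) > μ(Y) − ε. -/

import Mathlib

open scoped Classical

/-- Two vertex sets are anticomplete: no edge of `G` joins them. -/
def Anticomplete {V : Type*} (G : SimpleGraph V) (A B : Finset V) : Prop :=
  ∀ a ∈ A, ∀ b ∈ B, ¬ G.Adj a b

/-- `X` induces a connected subgraph of `G`. -/
def ConnSub {V : Type*} (G : SimpleGraph V) (X : Finset V) : Prop :=
  (G.induce (X : Set V)).Connected

/-- `μ` is a mass on the (finite) vertex set: normalized, monotone, and subadditive on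
disjoint unions. -/
def IsMass {V : Type*} [Fintype V] [DecidableEq V] (μ : Finset V → ℝ) : Prop :=
  μ ∅ = 0 ∧ μ Finset.univ = 1 ∧ (∀ X Y : Finset V, X ⊆ Y → μ X ≤ μ Y) ∧
    ∀ X Y : Finset V, Disjoint X Y → μ (X ∪ Y) ≤ μ X + μ Y

/-- The massed graph `(G, μ)` is ε-coherent. -/
noncomputable def MassCoherent {V : Type*} [Fintype V] [DecidableEq V] (G : SimpleGraph V)
    (μ : Finset V → ℝ) (ε : ℝ) : Prop :=
  (∀ v : V, μ {v} < ε) ∧ (∀ v : V, μ (G.neighborSet v).toFinset < ε) ∧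
    ∀ A B : Finset V, Disjoint A B → Anticomplete G A B → min (μ A) (μ B) < ε

lemma connSub_singleton {V : Type*} (G : SimpleGraph V) (v : V) : ConnSub G {v} := by
  rw [ConnSub, Finset.coe_singleton]
  constructor
  · rintro ⟨a, ha⟩ ⟨b, hb⟩
    simp only [Set.mem_singleton_iff] at ha hb
    subst ha; subst hb
    exact SimpleGraph.Reachable.refl _

lemma connSub_insert {V : Type*} [DecidableEq V] {G : SimpleGraph V} {X : Finset V}
    (hX : ConnSub G X) {x w : V} (hx : x ∈ X) (hadj : G.Adj w x) :
    ConnSub G (insert w X) := by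
  rw [ConnSub, Finset.coe_insert, ← Set.singleton_union]
  have h1 : (G.induce ({w} : Set V)).Connected := by
    have := connSub_singleton G w
    rwa [ConnSub, Finset.coe_singleton] at this
  exact SimpleGraph.connected_induce_union h1.preconnected (SimpleGraph.Connected.preconnected hX) rfl (by exact_mod_cast hx) hadj

/-- In any finite set `Z`, every vertex lies in a connected subset that is anticomplete
to the rest of `Z` (its component). -/
lemma exists_component {V : Type*} [Fintype V] [DecidableEq V] (G : SimpleGraph V)
    (Z : Finset V) {v : V} (hv : v ∈ Z) :
    ∃ C ⊆ Z, v ∈ C ∧ ConnSub G C ∧ Anticomplete G C (Z \ C) := by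
  set S := Z.powerset.filter (fun C => v ∈ C ∧ ConnSub G C) with hS
  have hne : S.Nonempty := by
    refine ⟨{v}, ?_⟩
    simp only [hS, Finset.mem_filter, Finset.mem_powerset]
    exact ⟨Finset.singleton_subset_iff.2 hv, Finset.mem_singleton_self v, connSub_singleton G v⟩
  obtain ⟨C, hCS, hmax⟩ := S.exists_max_image Finset.card hne
  simp only [hS, Finset.mem_filter, Finset.mem_powerset] at hCS
  obtain ⟨hCZ, hvC, hCconn⟩ := hCS
  refine ⟨C, hCZ, hvC, hCconn, ?_⟩
  intro c hc b hb hadj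
  rw [Finset.mem_sdiff] at hb
  have : insert b C ∈ S := by
    simp only [hS, Finset.mem_filter, Finset.mem_powerset]
    exact ⟨Finset.insert_subset hb.1 hCZ, Finset.mem_insert_of_mem hvC,
      connSub_insert hCconn hc hadj.symm⟩
  have hcard := hmax _ this
  rw [Finset.card_insert_of_notMem hb.2] at hcard
  omega

theorem stmt_1 {V : Type*} [Fintype V] [DecidableEq V] (G : SimpleGraph V)
    (μ : Finset V → ℝ) (hμ : IsMass μ) (ε : ℝ) (hε : 0 < ε)
    (hcoh : MassCoherent G μ ε) (Y : Finset V) (hY : 3 * ε ≤ μ Y) :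
    ∃ X ⊆ Y, ConnSub G X ∧ μ Y - ε < μ X := by
  obtain ⟨hμ0, hμ1, hmono, hsub⟩ := hμ
  obtain ⟨-, -, hanti⟩ := hcoh
  by_cases hex : ∃ X ⊆ Y, ConnSub G X ∧ ε ≤ μ X
  · -- Case 1: some connected subset with mass ≥ ε; take one of maximum cardinality.
    obtain ⟨X₀, hX₀Y, hX₀c, hX₀μ⟩ := hex
    set S := Y.powerset.filter (fun X => ConnSub G X ∧ ε ≤ μ X) with hS
    have hne : S.Nonempty := ⟨X₀, by
      simp only [hS, Finset.mem_filter, Finset.mem_powerset]; exact ⟨hX₀Y, hX₀c, hX₀μ⟩⟩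
    obtain ⟨X, hXS, hmax⟩ := S.exists_max_image Finset.card hne
    simp only [hS, Finset.mem_filter, Finset.mem_powerset] at hXS
    obtain ⟨hXY, hXconn, hXμ⟩ := hXS
    have hac : Anticomplete G X (Y \ X) := by
      intro c hc b hb hadj
      rw [Finset.mem_sdiff] at hb
      have : insert b X ∈ S := by
        simp only [hS, Finset.mem_filter, Finset.mem_powerset]
        exact ⟨Finset.insert_subset hb.1 hXY, connSub_insert hXconn hc hadj.symm,
          le_trans hXμ (hmono _ _ (Finset.subset_insert _ _))⟩
      have hcard := hmax _ this
      rw [Finset.card_insert_of_notMem hb.2] at hcard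
      omega
    have hmin := hanti X (Y \ X) (Finset.disjoint_sdiff) hac
    have hrest : μ (Y \ X) < ε := by
      rcases min_lt_iff.1 hmin with h | h
      · linarith
      · exact h
    have hY' : μ Y ≤ μ X + μ (Y \ X) := by
      have := hsub X (Y \ X) Finset.disjoint_sdiff
      rwa [Finset.union_sdiff_of_subset hXY] at this
    exact ⟨X, hXY, hXconn, by linarith⟩
  · -- Case 2: every connected subset of Y has mass < ε; derive a contradiction.
    push_neg at hex
    exfalso
    set T := Y.powerset.filter (fun A => Anticomplete G A (Y \ A) ∧ μ A < ε) with hT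
    have hne : T.Nonempty := ⟨∅, by
      simp only [hT, Finset.mem_filter, Finset.mem_powerset]
      refine ⟨Finset.empty_subset _, ?_, by rw [hμ0]; exact hε⟩
      intro a ha; simp at ha⟩
    obtain ⟨A, hAT, hmax⟩ := T.exists_max_image Finset.card hne
    simp only [hT, Finset.mem_filter, Finset.mem_powerset] at hAT
    obtain ⟨hAY, hAac, hAμ⟩ := hAT
    -- A ≠ Y
    have hAne : A ≠ Y := by
      rintro rfl; linarith
    obtain ⟨v, hv⟩ : (Y \ A).Nonempty := by
      rw [Finset.sdiff_nonempty]
      intro h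
      exact hAne (Finset.Subset.antisymm hAY h)
    obtain ⟨C, hCZ, hvC, hCconn, hCac⟩ := exists_component G (Y \ A) hv
    have hCY : C ⊆ Y := hCZ.trans (Finset.sdiff_subset)
    have hCμ : μ C < ε := hex C hCY hCconn
    have hdisj : Disjoint A C := by
      refine Finset.disjoint_left.2 fun a ha hac => ?_
      exact (Finset.mem_sdiff.1 (hCZ hac)).2 ha
    set D := A ∪ C with hD
    have hDY : D ⊆ Y := Finset.union_subset hAY hCY
    have hDac : Anticomplete G D (Y \ D) := by
      intro d hd b hb hadj
      rw [Finset.mem_sdiff] at hb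
      have hbA : b ∉ A := fun h => hb.2 (Finset.mem_union_left _ h)
      have hbC : b ∉ C := fun h => hb.2 (Finset.mem_union_right _ h)
      rcases Finset.mem_union.1 hd with h | h
      · exact hAac d h b (Finset.mem_sdiff.2 ⟨hb.1, hbA⟩) hadj
      · exact hCac d h b (Finset.mem_sdiff.2 ⟨Finset.mem_sdiff.2 ⟨hb.1, hbA⟩, hbC⟩) hadj
    have hDμle : μ D ≤ μ A + μ C := hsub A C hdisj
    -- D is strictly larger than A, so by maximality μ D ≥ ε
    have hDμ : ε ≤ μ D := by
      by_contra h
      push_neg at h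
      have : D ∈ T := by
        simp only [hT, Finset.mem_filter, Finset.mem_powerset]
        exact ⟨hDY, hDac, h⟩
      have hcard := hmax _ this
      have hAD : A ⊆ D := Finset.subset_union_left
      have hvD : v ∈ D := Finset.mem_union_right _ hvC
      have hvA : v ∉ A := (Finset.mem_sdiff.1 hv).2
      have : A ⊂ D := Finset.ssubset_iff_of_subset hAD |>.2 ⟨v, hvD, hvA⟩
      have := Finset.card_lt_card this
      omega
    have hmin := hanti D (Y \ D) Finset.disjoint_sdiff hDac
    have hrest : μ (Y \ D) < ε := by
      rcases min_lt_iff.1 hmin with h | h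
      · linarith
      · exact h
    have hY' : μ Y ≤ μ D + μ (Y \ D) := by
      have := hsub D (Y \ D) Finset.disjoint_sdiff
      rwa [Finset.union_sdiff_of_subset hDY] at this
    linarith
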